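/- Let K be a finite field with card(K) = m + 1. In the Laurent polynomial ring K[x, x^{-1}] with its standard Z-grading, the ideal I generated by 1 + x^m is invariant under the gauge action (τ_t(1 + x^m) = 1 + x^m for all t ∈ K*), but I is not a graded ideal. -/

import Mathlib

open LaurentPolynomial

/-- The gauge action of `t ∈ Kˣ` on Laurent polynomials: the coefficient of `x ^ n` is
multiplied by `t ^ n`. -/
noncomputable def laurentGauge {K : Type*} [Field K] (t : Kˣ) (p : LaurentPolynomial K) :
    LaurentPolynomial K :=
  p.coeff.sum fun n c => LaurentPolynomial.C (c * ((t ^ n : Kˣ) : K)) * LaurentPolynomial.T n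

/-- For a finite field `K` with `card K = m + 1`, in `K[x, x⁻¹]` the ideal
generated by `1 + x ^ m` is gauge-invariant (indeed `τ_t (1 + x^m) = 1 + x^m` for all
`t ∈ K*`), but it is not a graded ideal. -/
theorem laurent_gauge_invariant_not_graded (K : Type*) [Field K] [Fintype K] (m : ℕ)
    (hcard : Fintype.card K = m + 1) :
    (∀ t : Kˣ, laurentGauge t (1 + LaurentPolynomial.T (m : ℤ)) =
        1 + LaurentPolynomial.T (m : ℤ)) ∧
    ¬ (∀ p ∈ Ideal.span {(1 + LaurentPolynomial.T (m : ℤ) : LaurentPolynomial K)},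
        ∀ n : ℤ, LaurentPolynomial.C (p.coeff n) * LaurentPolynomial.T n ∈
          Ideal.span {(1 + LaurentPolynomial.T (m : ℤ) : LaurentPolynomial K)}) := by
  have hm : 1 ≤ m := by
    have := Fintype.one_lt_card (α := K)
    omega
  have hm0 : (m : ℤ) ≠ 0 := by exact_mod_cast Nat.one_le_iff_ne_zero.mp hm
  have htm : ∀ t : Kˣ, ((t ^ (m : ℤ) : Kˣ) : K) = 1 := by
    intro t
    have h1 := FiniteField.pow_card_sub_one_eq_one (t : K) t.ne_zero
    rw [hcard, Nat.add_sub_cancel] at h1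
    rw [zpow_natCast, Units.val_pow_eq_pow_val, h1]
  constructor
  · intro t
    have h1 : (1 : LaurentPolynomial K).coeff = Finsupp.single 0 1 := rfl
    have hT : (LaurentPolynomial.T (m : ℤ) : LaurentPolynomial K).coeff = Finsupp.single (m : ℤ) 1 := rfl
    rw [laurentGauge, AddMonoidAlgebra.coeff_add, h1, hT, Finsupp.sum_add_index (by simp) (by intros; simp [add_mul]),
      Finsupp.sum_single_index (by simp), Finsupp.sum_single_index (by simp)]
    simp only [one_mul, zpow_zero, Units.val_one, map_one, T_zero, mul_one, htm t]
  · intro h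
    have hmem : (1 + LaurentPolynomial.T (m : ℤ) : LaurentPolynomial K) ∈
        Ideal.span {(1 + LaurentPolynomial.T (m : ℤ) : LaurentPolynomial K)} :=
      Ideal.mem_span_singleton_self _
    have h0 := h _ hmem 0
    have hcoeff : ((1 + LaurentPolynomial.T (m : ℤ) : LaurentPolynomial K)).coeff 0 = 1 := by
      show ((Finsupp.single 0 1 + Finsupp.single (m : ℤ) 1 : ℤ →₀ K)) 0 = 1
      rw [Finsupp.add_apply, Finsupp.single_apply, Finsupp.single_apply]
      simp [hm0, Nat.one_le_iff_ne_zero.mp hm]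
    rw [hcoeff] at h0
    simp only [map_one, LaurentPolynomial.T_zero, one_mul] at h0
    -- so the ideal is ⊤, hence 1 + T m is a unit
    have hu : IsUnit (1 + LaurentPolynomial.T (m : ℤ) : LaurentPolynomial K) := by
      rw [← Ideal.span_singleton_eq_top]
      exact (Ideal.eq_top_iff_one _).mpr h0
    obtain ⟨u, hu⟩ := hu
    -- u⁻¹ is the inverse
    have hinv : (1 + LaurentPolynomial.T (m : ℤ) : LaurentPolynomial K) * (↑u⁻¹ : LaurentPolynomial K) = 1 := by
      rw [← hu]; exact u.mul_inv
    obtain ⟨n, f, hf⟩ := LaurentPolynomial.exists_T_pow (R := K) (↑u⁻¹ : LaurentPolynomial K)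
    have key : Polynomial.toLaurent ((1 + Polynomial.X ^ m) * f) = Polynomial.toLaurent (Polynomial.X ^ n : Polynomial K) := by
      rw [map_mul, hf, Polynomial.toLaurent_X_pow]
      rw [map_add, map_one, Polynomial.toLaurent_X_pow, ← mul_assoc, hinv, one_mul]
    have key' : (1 + Polynomial.X ^ m) * f = (Polynomial.X ^ n : Polynomial K) :=
      Polynomial.toLaurent_injective key
    have hfne : f ≠ 0 := by
      intro hf0
      rw [hf0, mul_zero] at key'
      exact (pow_ne_zero n Polynomial.X_ne_zero) key'.symm
    have hpne : (1 + Polynomial.X ^ m : Polynomial K) ≠ 0 := by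
      intro h0'
      have := congrArg (fun p => Polynomial.coeff p 0) h0'
      simp [Polynomial.coeff_X_pow, (Nat.one_le_iff_ne_zero.mp hm).symm] at this
    have hdeg : m + f.natDegree = n := by
      have := congrArg Polynomial.natDegree key'
      rw [Polynomial.natDegree_mul hpne hfne, Polynomial.natDegree_X_pow,
        add_comm (1 : Polynomial K), ← Polynomial.C_1,
        Polynomial.natDegree_X_pow_add_C] at this
      exact this
    have htdeg : f.natTrailingDegree = n := by
      have := congrArg Polynomial.natTrailingDegree key'
      rwa [Polynomial.natTrailingDegree_mul hpne hfne, Polynomial.natTrailingDegree_X_pow,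
        Polynomial.natTrailingDegree_eq_zero_of_constantCoeff_ne_zero (by
          simp [Polynomial.constantCoeff_apply, Polynomial.coeff_X_pow,
            (Nat.one_le_iff_ne_zero.mp hm).symm]), zero_add] at this
    have := Polynomial.natTrailingDegree_le_natDegree f
    omega
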